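/- arXiv:0909.2016 — 2 statements merged into one kernel-verified Lean document; each statement's English description precedes it below -/
import Mathlib

section
/- Let c > 0 be a real number and n ∈ ℕ. Define F : ℂ → ℂ by F(s) = Σ_{m=1}^{n} exp(−iπ s) · exp(−s · log(c m)) + ζ(s) · exp(−s · log c), where ζ is the Riemann zeta function (the analytic continuation of Σ_{m≥1} (c m)^{−s} being ζ(s) c^{−s}). Then F is complex-differentiable at s = 0 and −F'(0) = (n − 1/2) · log c + log(n!) + (1/2) · log(2π) + iπ n. Consequently the zeta-regularized product [∏_{m ∈ ℤ_{≥0}, m ≠ n} c (m − n)] := exp(−F'(0)) equals (−1)^n c^n n! √(2π/c), i.e. its reciprocal is (−1)^n c^{−n} (n!)^{−1} √(c/(2π)). (Lemma 3.2 with c = aħ/2π.) -/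
open Complex

/-- The analytic expression for `ζ` near `0`:
`ζ(s) = π^{s/2}/Γ(s/2+1) · ((s/2)(Λ₀(s) − 1/(1−s)) − 1/2)`. -/
noncomputable def Zaux (s : ℂ) : ℂ :=
  Complex.exp (s * (Real.log Real.pi) / 2) / Complex.Gamma (s / 2 + 1) *
    (s / 2 * (completedRiemannZeta₀ s - 1 / (1 - s)) - 1 / 2)

lemma zeta_eq_Zaux {s : ℂ} (hs : ‖s‖ < 1 / 2) : riemannZeta s = Zaux s := by
  rcases eq_or_ne s 0 with rfl | hs0
  · simp [Zaux, riemannZeta_zero, Complex.Gamma_one]; norm_num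
  · have hs2 : s / 2 ≠ 0 := by simpa using hs0
    have hg : Complex.Gamma (s / 2) ≠ 0 := by
      refine Complex.Gamma_ne_zero fun m => ?_
      intro hm
      have hsm : s = -(2 * m) := by
        field_simp at hm
        linear_combination hm
      rw [hsm] at hs hs0
      rcases Nat.eq_zero_or_pos m with rfl | hm1
      · simp at hs0
      · rw [norm_neg] at hs
        have : (1 : ℝ) ≤ ‖(2 * m : ℂ)‖ := by
          have : ((2 * m : ℕ) : ℂ) = 2 * (m : ℂ) := by push_cast; ring
          rw [← this, Complex.norm_natCast]
          exact_mod_cast Nat.one_le_iff_ne_zero.mpr (by omega)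
        linarith
    have h1s : (1 : ℂ) - s ≠ 0 := by
      intro h
      have : s = 1 := by linear_combination -h
      rw [this] at hs; norm_num at hs
    have hΓ : Complex.Gamma (s / 2 + 1) = s / 2 * Complex.Gamma (s / 2) :=
      Complex.Gamma_add_one _ hs2
    have hpow : (Real.pi : ℂ) ^ (-s / 2) = (Complex.exp (s * (Real.log Real.pi) / 2))⁻¹ := by
      rw [Complex.cpow_def_of_ne_zero (by exact_mod_cast Real.pi_ne_zero),
        ← Complex.ofReal_log Real.pi_pos.le, ← Complex.exp_neg]
      ring_nf
    rw [riemannZeta_def_of_ne_zero hs0, completedRiemannZeta_eq, Zaux, Gammaℝ_def, hpow, hΓ]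
    have hE := Complex.exp_ne_zero (s * (Real.log Real.pi) / 2)
    field_simp
    ring

lemma lambda0_zero : completedRiemannZeta₀ 0 =
    ((Real.eulerMascheroniConstant : ℂ) - Complex.log (4 * Real.pi)) / 2 + 1 := by
  have h := completedRiemannZeta₀_one_sub 1
  norm_num at h
  rw [h, completedRiemannZeta₀_one]

lemma hasDerivAt_Zaux :
    HasDerivAt Zaux
      (((Real.log Real.pi : ℂ) / 2 + (Real.eulerMascheroniConstant : ℂ) / 2) * (-(1 / 2)) +
        1 * ((completedRiemannZeta₀ 0 - 1) / 2)) 0 := by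
  have hnum : HasDerivAt (fun s : ℂ => Complex.exp (s * (Real.log Real.pi) / 2))
      ((Real.log Real.pi : ℂ) / 2) 0 := by
    have h : HasDerivAt (fun s : ℂ => s * (Real.log Real.pi : ℂ) / 2)
        ((Real.log Real.pi : ℂ) / 2) 0 :=
      ((hasDerivAt_id (0 : ℂ)).mul_const _).div_const 2 |>.congr_deriv (by ring)
    simpa using h.cexp
  have hden : HasDerivAt (fun s : ℂ => Complex.Gamma (s / 2 + 1))
      (-(Real.eulerMascheroniConstant : ℂ) / 2) 0 := by
    have hin : HasDerivAt (fun s : ℂ => s / 2 + 1) (1 / 2) 0 := by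
      simpa using ((hasDerivAt_id (0 : ℂ)).div_const 2).add_const 1
    have hg : HasDerivAt Complex.Gamma (-(Real.eulerMascheroniConstant : ℂ)) ((0 : ℂ) / 2 + 1) := by
      norm_num; exact Complex.hasDerivAt_Gamma_one
    have := hg.comp 0 hin
    exact this.congr_deriv (by ring)
  have hA : HasDerivAt (fun s : ℂ => Complex.exp (s * (Real.log Real.pi) / 2) /
      Complex.Gamma (s / 2 + 1))
      ((Real.log Real.pi : ℂ) / 2 + (Real.eulerMascheroniConstant : ℂ) / 2) 0 := by
    have := hnum.div hden (by norm_num [Complex.Gamma_one])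
    exact this.congr_deriv (by
      simp [Complex.Gamma_one]; ring)
  have hΛ : HasDerivAt completedRiemannZeta₀ (deriv completedRiemannZeta₀ 0) 0 :=
    (differentiable_completedZeta₀ 0).hasDerivAt
  have hinv : HasDerivAt (fun s : ℂ => 1 / (1 - s)) 1 0 := by
    have h1 : HasDerivAt (fun s : ℂ => 1 - s) (-1) 0 := by
      exact ((hasDerivAt_const (0:ℂ) (1:ℂ)).sub (hasDerivAt_id 0)).congr_deriv (by norm_num)
    have := (hasDerivAt_const (0:ℂ) (1:ℂ)).div h1 (by norm_num)
    exact this.congr_deriv (by norm_num)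
  have hB : HasDerivAt (fun s : ℂ => s / 2 * (completedRiemannZeta₀ s - 1 / (1 - s)) - 1 / 2)
      ((completedRiemannZeta₀ 0 - 1) / 2) 0 := by
    have := (((hasDerivAt_id (0:ℂ)).div_const 2).mul (hΛ.sub hinv)).sub_const (1/2 : ℂ)
    refine this.congr_deriv ?_
    norm_num
    try ring
  have := hA.mul hB
  refine this.congr_deriv ?_
  norm_num [Zaux, Complex.Gamma_one]

lemma Zaux_zero : Zaux 0 = -(1 / 2) := by
  simp [Zaux, Complex.Gamma_one]
  try norm_num

lemma log_sum_aux (c : ℝ) (hc : 0 < c) (n : ℕ) :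
    ∑ m ∈ Finset.Icc 1 n, Real.log (c * m) =
      n * Real.log c + Real.log (Nat.factorial n) := by
  have h1 : ∀ m ∈ Finset.Icc 1 n, Real.log (c * m) = Real.log c + Real.log m := by
    intro m hm
    have : (m : ℝ) ≠ 0 := by
      simp only [Finset.mem_Icc] at hm
      exact_mod_cast (by omega : m ≠ 0)
    rw [Real.log_mul hc.ne' this]
  rw [Finset.sum_congr rfl h1, Finset.sum_add_distrib, Finset.sum_const, Nat.card_Icc]
  have h2 : ∑ m ∈ Finset.Icc 1 n, Real.log (m : ℝ) = Real.log (Nat.factorial n) := by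
    rw [← Real.log_prod (fun m hm => by
      simp only [Finset.mem_Icc] at hm
      exact_mod_cast (by omega : m ≠ 0))]
    congr 1
    rw [← Nat.cast_prod]
    norm_cast
    rw [← Finset.Ico_add_one_right_eq_Icc]
    exact Finset.prod_Ico_id_eq_factorial n
  rw [h2]
  simp

lemma exp_exponent_aux (c : ℝ) (hc : 0 < c) (n : ℕ) :
    Real.exp ((n - 1/2) * Real.log c + Real.log (Nat.factorial n)
        + (1/2) * Real.log (2 * Real.pi)) =
      c ^ n * Nat.factorial n * Real.sqrt (2 * Real.pi / c) := by
  have hπ : (0:ℝ) < 2 * Real.pi := by positivity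
  have hfac : (0:ℝ) < Nat.factorial n := by exact_mod_cast Nat.factorial_pos n
  have hsq : Real.sqrt (2 * Real.pi / c) = Real.exp ((1/2) * Real.log (2 * Real.pi / c)) := by
    rw [Real.sqrt_eq_rpow, Real.rpow_def_of_pos (by positivity)]
    ring_nf
  rw [hsq, Real.log_div hπ.ne' hc.ne']
  rw [show (n - 1/2) * Real.log c + Real.log (Nat.factorial n)
        + (1/2) * Real.log (2 * Real.pi) =
      (n * Real.log c) + Real.log (Nat.factorial n)
        + (1/2) * (Real.log (2 * Real.pi) - Real.log c) by ring]
  rw [Real.exp_add, Real.exp_add, Real.exp_log hfac]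
  congr 1
  congr 1
  rw [← Real.log_pow, Real.exp_log (by positivity)]

lemma two_log_two_pi : Real.log Real.pi + Real.log (4 * Real.pi) = 2 * Real.log (2 * Real.pi) := by
  rw [← Real.log_mul Real.pi_ne_zero (by positivity),
    show Real.pi * (4 * Real.pi) = (2 * Real.pi) ^ 2 by ring, Real.log_pow]
  norm_num

/-- Lemma 3.2 (with `c = a hbar/2π`): the zeta-regularized product
`[∏_{m ∈ ℤ_{≥0}, m ≠ n} c(m−n)] = exp(−F'(0))` where
`F(s) = Σ_{m=1}^n e^{−iπs} e^{−s log(cm)} + ζ(s) e^{−s log c}`;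
one has `−F'(0) = (n − 1/2) log c + log n! + (1/2) log 2π + iπn`,
so the regularized product equals `(−1)^n c^n n! √(2π/c)`. -/
theorem zeta_regularized_product (c : ℝ) (hc : 0 < c) (n : ℕ) (F : ℂ → ℂ)
    (hF : ∀ s : ℂ, F s =
      (∑ m ∈ Finset.Icc 1 n,
          Complex.exp (-(Real.pi : ℂ) * Complex.I * s) *
            Complex.exp (-s * Real.log (c * m))) +
        riemannZeta s * Complex.exp (-s * Real.log c)) :
    DifferentiableAt ℂ F 0 ∧
    -deriv F 0 = ((n : ℂ) - 1 / 2) * Real.log c + Real.log (Nat.factorial n) +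
        (1 / 2 : ℂ) * Real.log (2 * Real.pi) + Real.pi * Complex.I * n ∧
    Complex.exp (-deriv F 0)
      = (-1) ^ n * (c : ℂ) ^ n * (Nat.factorial n : ℂ) * Real.sqrt (2 * Real.pi / c) := by
  -- the comparison function
  set G : ℂ → ℂ := fun s =>
    (∑ m ∈ Finset.Icc 1 n,
        Complex.exp (-(Real.pi : ℂ) * Complex.I * s) *
          Complex.exp (-s * Real.log (c * m))) +
      Zaux s * Complex.exp (-s * Real.log c) with hGdef
  have hFG : F =ᶠ[nhds 0] G := by
    filter_upwards [Metric.ball_mem_nhds (0 : ℂ) (by norm_num : (0:ℝ) < 1/2)] with s hs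
    rw [hF s, hGdef]
    simp only []
    rw [zeta_eq_Zaux (by simpa [Metric.mem_ball, dist_zero_right] using hs)]
  -- derivative of the finite sum
  have hsum : HasDerivAt (fun s : ℂ => ∑ m ∈ Finset.Icc 1 n,
      Complex.exp (-(Real.pi : ℂ) * Complex.I * s) * Complex.exp (-s * Real.log (c * m)))
      (∑ m ∈ Finset.Icc 1 n, (-(Real.pi : ℂ) * Complex.I - (Real.log (c * m) : ℂ))) 0 := by
    refine HasDerivAt.fun_sum fun m _ => ?_
    have h1 : HasDerivAt (fun s : ℂ => Complex.exp (-(Real.pi : ℂ) * Complex.I * s))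
        (-(Real.pi : ℂ) * Complex.I) 0 := by
      simpa using ((hasDerivAt_id (0 : ℂ)).const_mul (-(Real.pi : ℂ) * Complex.I)).cexp
    have h2 : HasDerivAt (fun s : ℂ => Complex.exp (-s * (Real.log (c * m) : ℂ)))
        (-(Real.log (c * m) : ℂ)) 0 := by
      simpa using ((hasDerivAt_id (0 : ℂ)).neg.mul_const (Real.log (c * m) : ℂ)).cexp
    exact (h1.mul h2).congr_deriv (by simp; ring)
  -- derivative of the exponential factor
  have hexpc : HasDerivAt (fun s : ℂ => Complex.exp (-s * (Real.log c : ℂ)))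
      (-(Real.log c : ℂ)) 0 := by
    simpa using ((hasDerivAt_id (0 : ℂ)).neg.mul_const (Real.log c : ℂ)).cexp
  -- total derivative of G
  have hG : HasDerivAt G
      ((∑ m ∈ Finset.Icc 1 n, (-(Real.pi : ℂ) * Complex.I - (Real.log (c * m) : ℂ))) +
        ((((Real.log Real.pi : ℂ) / 2 + (Real.eulerMascheroniConstant : ℂ) / 2) * (-(1 / 2)) +
          1 * ((completedRiemannZeta₀ 0 - 1) / 2)) * 1 + (-(1/2)) * (-(Real.log c : ℂ)))) 0 := by
    have hz := hasDerivAt_Zaux.mul hexpc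
    refine (hsum.add (hz.congr_deriv ?_))
    rw [Zaux_zero]
    simp
  have hDF : deriv F 0 = _ := hFG.deriv_eq.trans hG.deriv
  have key : -deriv F 0 = ((n : ℂ) - 1 / 2) * Real.log c + Real.log (Nat.factorial n) +
      (1 / 2 : ℂ) * Real.log (2 * Real.pi) + Real.pi * Complex.I * n := by
    rw [hDF]
    have hsum2 : (∑ m ∈ Finset.Icc 1 n, (-(Real.pi : ℂ) * Complex.I - (Real.log (c * m) : ℂ))) =
        -(Real.pi : ℂ) * Complex.I * n - ((n : ℂ) * Real.log c + Real.log (Nat.factorial n)) := by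
      rw [Finset.sum_sub_distrib, Finset.sum_const, Nat.card_Icc]
      congr 1
      · simp; ring
      · rw [← Complex.ofReal_sum]
        rw [log_sum_aux c hc n]
        push_cast
        ring
    rw [hsum2, lambda0_zero]
    have hlog4π : Complex.log (4 * (Real.pi : ℂ)) = (Real.log (4 * Real.pi) : ℂ) := by
      rw [show (4 : ℂ) * (Real.pi : ℂ) = ((4 * Real.pi : ℝ) : ℂ) by push_cast; ring,
        Complex.ofReal_log (by positivity)]
    rw [hlog4π]
    have h2π := two_log_two_pi
    have : (Real.log Real.pi : ℂ) + (Real.log (4 * Real.pi) : ℂ) =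
        2 * (Real.log (2 * Real.pi) : ℂ) := by exact_mod_cast congrArg Complex.ofReal h2π
    linear_combination ((1/4) : ℂ) * this
  refine ⟨hG.differentiableAt.congr_of_eventuallyEq hFG, key, ?_⟩
  rw [key]
  have hr : ((n : ℂ) - 1 / 2) * Real.log c + Real.log (Nat.factorial n) +
      (1 / 2 : ℂ) * Real.log (2 * Real.pi) + Real.pi * Complex.I * n =
      (((n - 1/2) * Real.log c + Real.log (Nat.factorial n)
        + (1/2) * Real.log (2 * Real.pi) : ℝ) : ℂ) + (n : ℂ) * ((Real.pi : ℂ) * Complex.I) := by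
    push_cast
    ring
  rw [hr, Complex.exp_add, Complex.exp_nat_mul, Complex.exp_pi_mul_I,
    ← Complex.ofReal_exp, exp_exponent_aux c hc n]
  push_cast
  ring
end

section
/- Let μ > 0 and ħ > 0 be real numbers and λ ∈ ℂ with Re(λ) > 0. Then lim_{a → +∞} (a/ħ)^{−1/2} · (a/(2π))^{−λ/ħ} · μ √(aħ) ∫_0^∞ e^{μ λ t} exp( −(2π/(aħ)) e^{μ ħ t} ) dt = ħ^{λ/ħ} Γ(λ/ħ), the limit being taken along real a → +∞. (This is eq. (3.36): removing the renormalization ambiguity recovers the Gamma-function value of the regularized S¹ × U(1)-equivariant volume.) -/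
open MeasureTheory Complex Filter

lemma cov_aux (μ hbar : ℝ) (hμ : 0 < μ) (hh : 0 < hbar) (lam : ℂ)
    {c : ℝ} (hc : 0 < c) :
    (∫ t in Set.Ioi (0:ℝ), Complex.exp (μ * lam * t) *
        Complex.exp (-(((c * Real.exp (μ * hbar * t)) : ℝ) : ℂ)))
      = ∫ u in Set.Ioi c,
          (μ * hbar * u)⁻¹ • (Complex.exp ((lam / hbar) * Real.log (u / c)) *
            ((Real.exp (-u) : ℝ) : ℂ)) := by
  set k := μ * hbar with hk
  have hk0 : 0 < k := mul_pos hμ hh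
  set f : ℝ → ℝ := fun t => c * Real.exp (k * t) with hfdef
  set f' : ℝ → ℝ := fun t => c * (Real.exp (k * t) * (k * 1)) with hf'def
  have himg : f '' Set.Ioi 0 = Set.Ioi c := by
    ext u
    constructor
    · rintro ⟨t, ht, rfl⟩
      have h1 : (1:ℝ) < Real.exp (k * t) := by
        rw [← Real.exp_zero]
        exact Real.exp_lt_exp.mpr (mul_pos hk0 ht)
      simpa [hfdef] using (lt_mul_iff_one_lt_right hc).mpr h1
    · intro hu
      have hu' : (1:ℝ) < u / c := (one_lt_div hc).mpr hu
      refine ⟨Real.log (u / c) / k, div_pos (Real.log_pos hu') hk0, ?_⟩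
      have h2 : k * (Real.log (u / c) / k) = Real.log (u / c) := by field_simp
      simp only [hfdef, h2, Real.exp_log (lt_trans one_pos hu' |>.trans_le le_rfl)]
      field_simp
  have hderiv : ∀ t ∈ Set.Ioi (0:ℝ), HasDerivWithinAt f (f' t) (Set.Ioi 0) t := by
    intro t _
    exact (((Real.hasDerivAt_exp (k*t)).comp t
      ((hasDerivAt_id t).const_mul k)).const_mul c).hasDerivWithinAt
  have hinj : Set.InjOn f (Set.Ioi 0) := by
    intro x _ y _ hxy
    have := mul_left_cancel₀ hc.ne' hxy
    exact mul_left_cancel₀ hk0.ne' (Real.exp_injective this)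
  rw [← himg, integral_image_eq_integral_abs_deriv_smul measurableSet_Ioi hderiv hinj]
  refine setIntegral_congr_fun measurableSet_Ioi fun t ht => ?_
  have het : (0:ℝ) < Real.exp (k * t) := Real.exp_pos _
  have hft : f t = c * Real.exp (k * t) := rfl
  have hq : c * Real.exp (k * t) / c = Real.exp (k * t) := by
    field_simp
  rw [hft, hq, Real.log_exp, abs_of_pos (by positivity), smul_smul]
  have hone : c * (Real.exp (k * t) * (k * 1)) * (μ * hbar * (c * Real.exp (k * t)))⁻¹ = 1 := by
    rw [← hk]
    field_simp
  rw [hone, one_smul]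
  congr 1
  · congr 1
    have hb : (hbar:ℂ) ≠ 0 := Complex.ofReal_ne_zero.mpr hh.ne'
    rw [hk]
    push_cast
    field_simp
  · push_cast
    ring_nf


/-- Eq. (3.36): removing the renormalization ambiguity recovers the Gamma function:
`lim_{a→+∞} (a/hbar)^{−1/2} (a/2π)^{−λ/hbar} μ √(a hbar)
   ∫_0^∞ e^{μλt} e^{−(2π/(a hbar)) e^{μ hbar t}} dt = hbar^{λ/hbar} Γ(λ/hbar)`. -/
theorem regularized_volume_limit (μ hbar : ℝ) (hμ : 0 < μ) (hh : 0 < hbar)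
    (lam : ℂ) (hlam : 0 < lam.re) :
    Tendsto (fun a : ℝ =>
        (Real.exp (-(1 / 2) * Real.log (a / hbar)) : ℂ) *
          Complex.exp (-(lam / hbar) * Real.log (a / (2 * Real.pi))) *
          ((μ : ℂ) * Real.sqrt (a * hbar)) *
          ∫ t in Set.Ioi (0 : ℝ),
            Complex.exp (μ * lam * t) *
              Complex.exp (-(((2 * Real.pi / (a * hbar)) * Real.exp (μ * hbar * t) : ℝ) : ℂ)))
      atTop
      (nhds (Complex.exp ((lam / hbar) * Real.log hbar) * Complex.Gamma (lam / hbar))) := by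
  set s : ℂ := lam / hbar with hs_def
  have hs_re : 0 < s.re := by
    rw [hs_def, Complex.div_ofReal_re]
    exact div_pos hlam hh
  set G : ℝ → ℂ := fun u => ((Real.exp (-u) : ℝ) : ℂ) *
      Complex.exp ((s - 1) * ((Real.log u : ℝ) : ℂ)) with hG_def
  have hG_eq : ∀ u : ℝ, 0 < u → G u = ((Real.exp (-u) : ℝ) : ℂ) * (u : ℂ) ^ (s - 1) := by
    intro u hu
    rw [hG_def]
    dsimp only
    rw [Complex.cpow_def_of_ne_zero (Complex.ofReal_ne_zero.mpr hu.ne'),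
      ← Complex.ofReal_log hu.le, mul_comm (s-1)]
  have hGint : IntegrableOn G (Set.Ioi 0) := by
    refine (Complex.GammaIntegral_convergent hs_re).congr_fun ?_ measurableSet_Ioi
    intro u hu
    exact (hG_eq u hu).symm
  have hGval : ∫ u in Set.Ioi (0:ℝ), G u = Complex.GammaIntegral s := by
    rw [Complex.GammaIntegral]
    exact setIntegral_congr_fun measurableSet_Ioi fun u hu => hG_eq u hu
  -- the key pointwise-in-`a` identity
  have key : ∀ a : ℝ, 0 < a →
      (Real.exp (-(1 / 2) * Real.log (a / hbar)) : ℂ) *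
          Complex.exp (-(lam / hbar) * Real.log (a / (2 * Real.pi))) *
          ((μ : ℂ) * Real.sqrt (a * hbar)) *
          ∫ t in Set.Ioi (0 : ℝ),
            Complex.exp (μ * lam * t) *
              Complex.exp (-(((2 * Real.pi / (a * hbar)) * Real.exp (μ * hbar * t) : ℝ) : ℂ))
        = Complex.exp (s * Real.log hbar) *
            ∫ u in Set.Ioi (2 * Real.pi / (a * hbar)), G u := by
    intro a ha
    have hc : 0 < 2 * Real.pi / (a * hbar) := by positivity
    set c : ℝ := 2 * Real.pi / (a * hbar) with hc_def
    rw [cov_aux μ hbar hμ hh lam hc]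
    -- rewrite the substituted integrand as a constant times `G`
    have hcongr : ∫ u in Set.Ioi c,
        (μ * hbar * u)⁻¹ • (Complex.exp ((lam / hbar) * Real.log (u / c)) *
          ((Real.exp (-u) : ℝ) : ℂ))
        = ∫ u in Set.Ioi c,
            (((μ * hbar)⁻¹ : ℝ) : ℂ) * Complex.exp (-(s * Real.log c)) * G u := by
      refine setIntegral_congr_fun measurableSet_Ioi fun u hu => ?_
      have hu0 : 0 < u := hc.trans hu
      have hlog : Real.log (u / c) = Real.log u - Real.log c :=
        Real.log_div hu0.ne' hc.ne'
      have hexpu : Complex.exp ((Real.log u : ℝ) : ℂ) = (u : ℂ) := by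
        rw [← Complex.ofReal_exp, Real.exp_log hu0]
      rw [Complex.real_smul, hG_def]
      dsimp only
      rw [hlog]
      push_cast
      rw [mul_sub, Complex.exp_sub, sub_one_mul, Complex.exp_sub, hexpu,
        Complex.exp_neg]
      have hu0' : (u : ℂ) ≠ 0 := Complex.ofReal_ne_zero.mpr hu0.ne'
      have hmh : ((μ : ℂ) * hbar) ≠ 0 := by
        push_cast
        exact mul_ne_zero (Complex.ofReal_ne_zero.mpr hμ.ne')
          (Complex.ofReal_ne_zero.mpr hh.ne')
      rw [hs_def]
      push_cast
      field_simp
      rw [← Complex.exp_add, add_neg_cancel, Complex.exp_zero]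
    rw [hcongr, MeasureTheory.integral_const_mul]
    -- now pure prefactor algebra
    have hsqrt : Real.exp (-(1 / 2) * Real.log (a / hbar)) * Real.sqrt (a * hbar) = hbar := by
      have h1 : Real.exp (-(1 / 2) * Real.log (a / hbar)) = (a / hbar) ^ (-(1/2) : ℝ) := by
        rw [Real.rpow_def_of_pos (div_pos ha hh), mul_comm]
      rw [h1, Real.sqrt_eq_rpow, Real.rpow_neg (div_pos ha hh).le,
        ← Real.inv_rpow (div_pos ha hh).le, inv_div,
        ← Real.mul_rpow (div_pos hh ha).le (mul_pos ha hh).le]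
      have h2 : hbar / a * (a * hbar) = hbar ^ (2:ℕ) := by
        field_simp
      rw [h2, ← Real.rpow_natCast hbar 2, ← Real.rpow_mul hh.le]
      norm_num
    have hlogc : Real.log (a / (2 * Real.pi)) + Real.log c = - Real.log hbar := by
      rw [hc_def, ← Real.log_mul (by positivity) (by positivity)]
      have : a / (2 * Real.pi) * (2 * Real.pi / (a * hbar)) = hbar⁻¹ := by
        field_simp
      rw [this, Real.log_inv]
    -- combine
    have hcexp : Complex.exp (-(lam / hbar) * Real.log (a / (2 * Real.pi))) *
        Complex.exp (-(s * Real.log c)) = Complex.exp (s * Real.log hbar) := by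
      rw [← Complex.exp_add]
      congr 1
      rw [hs_def]
      have : (Real.log (a / (2 * Real.pi)) : ℂ) + (Real.log c : ℂ)
          = -(Real.log hbar : ℂ) := by
        rw [← Complex.ofReal_add, hlogc, Complex.ofReal_neg]
      have h3 : -(lam / hbar) * Real.log (a / (2 * Real.pi)) +
          -(lam / hbar * Real.log c) = -(lam / hbar) *
          ((Real.log (a / (2 * Real.pi)) : ℂ) + (Real.log c : ℂ)) := by ring
      rw [h3, this]
      ring
    calc (Real.exp (-(1 / 2) * Real.log (a / hbar)) : ℂ) *
          Complex.exp (-(lam / hbar) * Real.log (a / (2 * Real.pi))) *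
          ((μ : ℂ) * Real.sqrt (a * hbar)) *
          ((((μ * hbar)⁻¹ : ℝ) : ℂ) * Complex.exp (-(s * Real.log c)) *
            ∫ u in Set.Ioi c, G u)
        = ((Real.exp (-(1 / 2) * Real.log (a / hbar)) * Real.sqrt (a * hbar) : ℝ) : ℂ) *
            ((μ : ℝ) : ℂ) * (((μ * hbar)⁻¹ : ℝ) : ℂ) *
            (Complex.exp (-(lam / hbar) * Real.log (a / (2 * Real.pi))) *
              Complex.exp (-(s * Real.log c))) * ∫ u in Set.Ioi c, G u := by
          push_cast
          ring
      _ = Complex.exp (s * Real.log hbar) * ∫ u in Set.Ioi c, G u := by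
          rw [hsqrt, hcexp]
          have hr : hbar * μ * (μ * hbar)⁻¹ = 1 := by
            field_simp
          have h4 : ((hbar : ℝ) : ℂ) * ((μ : ℝ) : ℂ) * (((μ * hbar)⁻¹ : ℝ) : ℂ) = 1 := by
            rw [← Complex.ofReal_mul, ← Complex.ofReal_mul, hr, Complex.ofReal_one]
          rw [h4, one_mul]
  -- limit part
  have hc_tend : Tendsto (fun a : ℝ => 2 * Real.pi / (a * hbar)) atTop (nhds 0) := by
    have heq : (fun a : ℝ => 2 * Real.pi / (a * hbar))
        = fun a : ℝ => (2 * Real.pi / hbar) / a := by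
      funext a
      ring
    rw [heq]
    exact tendsto_const_nhds.div_atTop tendsto_id
  have hsplit : ∀ a : ℝ, 0 < a →
      ∫ u in Set.Ioi (2 * Real.pi / (a * hbar)), G u
        = (∫ u in Set.Ioi (0:ℝ), G u)
            - ∫ u in Set.Ioc (0:ℝ) (2 * Real.pi / (a * hbar)), G u := by
    intro a ha
    have hc : 0 < 2 * Real.pi / (a * hbar) := by positivity
    have hunion : Set.Ioc (0:ℝ) (2 * Real.pi / (a * hbar))
        ∪ Set.Ioi (2 * Real.pi / (a * hbar)) = Set.Ioi 0 :=
      Set.Ioc_union_Ioi_eq_Ioi hc.le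
    have hsum := MeasureTheory.setIntegral_union (f := G) (μ := volume)
      (Set.Ioc_disjoint_Ioi le_rfl) measurableSet_Ioi
      (hGint.mono_set (fun x hx => hx.1)) (hGint.mono_set (Set.Ioi_subset_Ioi hc.le))
    rw [hunion] at hsum
    rw [hsum]
    ring
  have hnormG : ∀ u : ℝ, 0 < u → ‖G u‖ = Real.exp (-u) * u ^ (s.re - 1) := by
    intro u hu0
    rw [hG_def]
    dsimp only
    rw [norm_mul, Complex.norm_real, Real.norm_eq_abs,
      abs_of_pos (Real.exp_pos _), Complex.norm_exp]
    congr 1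
    rw [Real.rpow_def_of_pos hu0]
    congr 1
    simp [Complex.mul_re, Complex.sub_re, Complex.sub_im, Complex.ofReal_re,
      Complex.ofReal_im]
    ring
  have htail : Tendsto
      (fun a : ℝ => ∫ u in Set.Ioc (0:ℝ) (2 * Real.pi / (a * hbar)), G u)
      atTop (nhds 0) := by
    have hB : Tendsto (fun a : ℝ => (2 * Real.pi / (a * hbar)) ^ s.re / s.re)
        atTop (nhds 0) := by
      have hcont : ContinuousAt (fun x : ℝ => x ^ s.re) 0 :=
        Real.continuousAt_rpow_const 0 s.re (Or.inr hs_re.le)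
      have h6 := (hcont.tendsto.comp hc_tend).div_const s.re
      simpa [Real.zero_rpow hs_re.ne'] using h6
    refine squeeze_zero_norm' ?_ hB
    filter_upwards [eventually_gt_atTop (0:ℝ)] with a ha
    have hc : 0 < 2 * Real.pi / (a * hbar) := by positivity
    set c : ℝ := 2 * Real.pi / (a * hbar) with hc_def
    have hint_rpow : IntegrableOn (fun u : ℝ => u ^ (s.re - 1)) (Set.Ioc 0 c) := by
      have h7 := intervalIntegral.intervalIntegrable_rpow' (a := 0) (b := c)
        (show (-1:ℝ) < s.re - 1 by linarith)
      rwa [intervalIntegrable_iff_integrableOn_Ioc_of_le hc.le] at h7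
    calc ‖∫ u in Set.Ioc (0:ℝ) c, G u‖
        ≤ ∫ u in Set.Ioc (0:ℝ) c, ‖G u‖ := norm_integral_le_integral_norm _
      _ ≤ ∫ u in Set.Ioc (0:ℝ) c, u ^ (s.re - 1) := by
          refine setIntegral_mono_on
            ((hGint.mono_set (fun x hx => hx.1)).norm) hint_rpow measurableSet_Ioc ?_
          intro u hu
          rw [hnormG u hu.1]
          exact mul_le_of_le_one_left (Real.rpow_nonneg hu.1.le _)
            (Real.exp_le_one_iff.mpr (neg_nonpos.mpr hu.1.le))
      _ = c ^ s.re / s.re := by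
          rw [← intervalIntegral.integral_of_le hc.le,
            integral_rpow (Or.inl (show (-1:ℝ) < s.re - 1 by linarith))]
          rw [sub_add_cancel, Real.zero_rpow hs_re.ne', sub_zero]
  have hlim := ((tendsto_const_nhds (α := ℝ) (f := atTop)
    (x := ∫ u in Set.Ioi (0:ℝ), G u)).sub htail).const_mul
    (Complex.exp (s * ((Real.log hbar : ℝ) : ℂ)))
  have heq2 : (fun a : ℝ => Complex.exp (s * ((Real.log hbar : ℝ) : ℂ)) *
      ((∫ u in Set.Ioi (0:ℝ), G u)
        - ∫ u in Set.Ioc (0:ℝ) (2 * Real.pi / (a * hbar)), G u)) =ᶠ[atTop]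
      (fun a : ℝ =>
        (Real.exp (-(1 / 2) * Real.log (a / hbar)) : ℂ) *
          Complex.exp (-(lam / hbar) * Real.log (a / (2 * Real.pi))) *
          ((μ : ℂ) * Real.sqrt (a * hbar)) *
          ∫ t in Set.Ioi (0 : ℝ),
            Complex.exp (μ * lam * t) *
              Complex.exp (-(((2 * Real.pi / (a * hbar)) * Real.exp (μ * hbar * t) : ℝ) : ℂ))) := by
    filter_upwards [eventually_gt_atTop (0:ℝ)] with a ha
    rw [key a ha, hsplit a ha]
  have hfinal := hlim.congr' heq2
  have h5 : Complex.exp (s * ((Real.log hbar : ℝ) : ℂ)) * ((∫ u in Set.Ioi (0:ℝ), G u) - 0)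
      = Complex.exp (s * Real.log hbar) * Complex.Gamma s := by
    rw [sub_zero, hGval, ← Complex.Gamma_eq_integral hs_re]
  rw [h5] at hfinal
  exact hfinal
end
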